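/- For any finite multigraph G in which some edge e is not a loop, the number of distinct outdegree vectors of orientations of G equals the number of distinct outdegree vectors of orientations of G−e plus the number of distinct outdegree vectors of orientations of G/e. -/

import Mathlib

open Finset

variable {V E : Type*}

/-- Number of connected components of the multigraph on vertex set `V`
with edges `A ⊆ E`, where `ends e` gives the (unordered) endpoints of `e`. -/
noncomputable def numComponents (ends : E → Sym2 V) (A : Finset E) : ℕ :=
  Nat.card (SimpleGraph.fromRel fun x y => ∃ e ∈ A, ends e = s(x, y)).ConnectedComponent

/-- The spanning subgraph `(V, A)` of the multigraph is a forest: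
no loops, no parallel edges, and the underlying simple graph is acyclic. -/
def IsForestEdges (ends : E → Sym2 V) (A : Finset E) : Prop :=
  (∀ e ∈ A, ¬ (ends e).IsDiag) ∧ Set.InjOn ends ↑A ∧
    (SimpleGraph.fromRel fun x y => ∃ e ∈ A, ends e = s(x, y)).IsAcyclic

/-- Subset-expansion evaluation of the Tutte polynomial of the multigraph. -/
noncomputable def tutteEval [Fintype V] [Fintype E] [DecidableEq E]
    (ends : E → Sym2 V) (x y : ℤ) : ℤ :=
  ∑ A : Finset E,
    (x - 1) ^ (numComponents ends A - numComponents ends Finset.univ) *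
      (y - 1) ^ (numComponents ends A + A.card - Fintype.card V)

/-- Tail of edge `e` under the orientation `σ` (edges carry a reference
direction `src e → tgt e`; `σ e = true` means the edge is flipped). -/
def otail (src tgt : E → V) (σ : E → Bool) (e : E) : V :=
  if σ e then tgt e else src e

/-- Head of edge `e` under the orientation `σ`. -/
def ohead (src tgt : E → V) (σ : E → Bool) (e : E) : V :=
  if σ e then src e else tgt e

/-- Outdegree of `v` under the orientation `σ`. -/
def outdeg [Fintype E] [DecidableEq V] (src tgt : E → V) (σ : E → Bool) (v : V) : ℕ :=
  (Finset.univ.filter fun e => otail src tgt σ e = v).card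

/-- Indegree of `v` under the orientation `σ`. -/
def indeg [Fintype E] [DecidableEq V] (src tgt : E → V) (σ : E → Bool) (v : V) : ℕ :=
  (Finset.univ.filter fun e => ohead src tgt σ e = v).card

/-- Score of `v` under the orientation `σ`: outdegree minus indegree. -/
def score [Fintype E] [DecidableEq V] (src tgt : E → V) (σ : E → Bool) (v : V) : ℤ :=
  (outdeg src tgt σ v : ℤ) - (indeg src tgt σ v : ℤ)

/-- Score of `v` in the spanning subdigraph of `G_σ` with arc set `F`. -/
def scoreSub [DecidableEq V] (src tgt : E → V) (σ : E → Bool) (F : Finset E) (v : V) : ℤ :=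
  ((F.filter fun e => otail src tgt σ e = v).card : ℤ) -
    ((F.filter fun e => ohead src tgt σ e = v).card : ℤ)

/-- Degree of `v` in the spanning subgraph with edge set `F` (loops count twice). -/
def degIn [DecidableEq V] (src tgt : E → V) (F : Finset E) (v : V) : ℕ :=
  (F.filter fun e => src e = v).card + (F.filter fun e => tgt e = v).card

/-- Directed reachability in the digraph `G_σ`. -/
def dirReach (src tgt : E → V) (σ : E → Bool) : V → V → Prop :=
  Relation.ReflTransGen fun x y => ∃ e, otail src tgt σ e = x ∧ ohead src tgt σ e = y


set_option linter.unusedSectionVars false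

section OrientAux
variable {V E : Type*}
namespace Orient

/-- add 1 at coordinate z -/
def addAt {α : Type*} [DecidableEq α] (z : α) (d : α → ℕ) : α → ℕ :=
  fun w => d w + if w = z then 1 else 0

lemma addAt_injective {α : Type*} [DecidableEq α] (z : α) :
    Function.Injective (addAt z) := by
  intro d₁ d₂ h
  funext w
  have := congrFun h w
  simp only [addAt] at this
  omega


section WalkPart
variable (src tgt : E → V)
/-- directed walk along list of edges -/
def Walk (σ : E → Bool) : V → List E → V → Prop
  | a, [], b => a = b
  | a, (f :: L), b => otail src tgt σ f = a ∧ Walk σ (ohead src tgt σ f) L b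

lemma walk_append {σ : E → Bool} {a b : V} {L₁ L₂ : List E}
    (h : Walk src tgt σ a (L₁ ++ L₂) b) :
    ∃ c, Walk src tgt σ a L₁ c ∧ Walk src tgt σ c L₂ b := by
  induction L₁ generalizing a with
  | nil => exact ⟨a, rfl, h⟩
  | cons f L ih =>
      obtain ⟨h1, h2⟩ := h
      obtain ⟨c, hc1, hc2⟩ := ih h2
      exact ⟨c, ⟨h1, hc1⟩, hc2⟩

lemma walk_append' {σ : E → Bool} {a b c : V} {L₁ L₂ : List E}
    (h₁ : Walk src tgt σ a L₁ c) (h₂ : Walk src tgt σ c L₂ b) :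
    Walk src tgt σ a (L₁ ++ L₂) b := by
  induction L₁ generalizing a with
  | nil => rwa [h₁]
  | cons f L ih => exact ⟨h₁.1, ih h₁.2⟩

lemma walk_congr {σ σ' : E → Bool} {a b : V} {L : List E}
    (hag : ∀ f ∈ L, σ f = σ' f) (h : Walk src tgt σ a L b) :
    Walk src tgt σ' a L b := by
  induction L generalizing a with
  | nil => exact h
  | cons f L ih =>
      obtain ⟨h1, h2⟩ := h
      have hf : σ f = σ' f := hag f (by simp)
      refine ⟨?_, ?_⟩
      · rw [otail, ← hf]; exact h1
      · have : ohead src tgt σ' f = ohead src tgt σ f := by rw [ohead, ohead, hf]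
        rw [this]
        exact ih (fun g hg => hag g (by simp [hg])) h2

lemma dirReach_walk {σ : E → Bool} {a b : V} (h : dirReach src tgt σ a b) :
    ∃ L, Walk src tgt σ a L b := by
  induction h with
  | refl => exact ⟨[], rfl⟩
  | tail _ step ih =>
      obtain ⟨L, hL⟩ := ih
      obtain ⟨f, hf1, hf2⟩ := step
      exact ⟨L ++ [f], walk_append' src tgt hL ⟨hf1, by rw [hf2]; rfl⟩⟩


variable [Fintype E] [DecidableEq E] [DecidableEq V]
lemma card_filter_univ_split (f : E) (P : E → Prop) [DecidablePred P] :
    (univ.filter P).card = ((univ.erase f).filter P).card + if P f then 1 else 0 := by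
  conv_lhs => rw [← insert_erase (mem_univ f)]
  rw [filter_insert]
  split_ifs with h
  · rw [card_insert_of_notMem (by simp)]
  · rw [Nat.add_zero]

omit [Fintype E] [DecidableEq V] in
lemma otail_update (σ : E → Bool) (f : E) :
    otail src tgt (Function.update σ f (!σ f)) f = ohead src tgt σ f := by
  simp only [otail, ohead, Function.update_self]
  cases h : σ f <;> simp [h]

omit [Fintype E] [DecidableEq V] in
lemma ohead_update (σ : E → Bool) (f : E) :
    ohead src tgt (Function.update σ f (!σ f)) f = otail src tgt σ f := by
  simp only [otail, ohead, Function.update_self]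
  cases h : σ f <;> simp [h]

lemma outdeg_update (σ : E → Bool) (f : E) (w : V) :
    outdeg src tgt (Function.update σ f (!σ f)) w + (if otail src tgt σ f = w then 1 else 0)
      = outdeg src tgt σ w + (if ohead src tgt σ f = w then 1 else 0) := by
  set σ₁ := Function.update σ f (!σ f) with hσ₁
  have key : ∀ g ∈ univ.erase f, (otail src tgt σ₁ g = w) ↔ (otail src tgt σ g = w) := by
    intro g hg
    have hg' : σ₁ g = σ g := Function.update_of_ne (mem_erase.mp hg).1 _ σ
    rw [otail, otail, hg']
  rw [outdeg, outdeg, card_filter_univ_split f, card_filter_univ_split f,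
    filter_congr key, otail_update]
  ring

theorem reverse_walk (σ : E → Bool) (a b : V) (L : List E) (h : Walk src tgt σ a L b) :
    ∃ ρ : E → Bool, ∀ w, outdeg src tgt ρ w + (if w = a then 1 else 0)
      = outdeg src tgt σ w + (if w = b then 1 else 0) := by
  obtain ⟨n, hn⟩ : ∃ n, L.length ≤ n := ⟨L.length, le_refl _⟩
  induction n generalizing σ a L with
  | zero =>
      rw [List.length_eq_zero_iff.mp (Nat.le_zero.mp hn)] at h
      exact ⟨σ, by rw [h]; intro w; rfl⟩
  | succ n ih =>
      match L with
      | [] => exact ⟨σ, by rw [h]; intro w; rfl⟩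
      | f :: L' =>
          obtain ⟨h1, h2⟩ := h
          by_cases hf : f ∈ L'
          · obtain ⟨L₁, L₂, rfl⟩ := List.append_of_mem hf
            obtain ⟨c, hc1, hc2⟩ := walk_append src tgt h2
            have hwalk : Walk src tgt σ a (f :: L₂) b := ⟨h1, hc2.2⟩
            refine ih σ a (f :: L₂) hwalk ?_
            simp only [List.length_cons, List.length_append] at hn ⊢
            omega
          · set σ₁ := Function.update σ f (!σ f) with hσ₁
            have hag : ∀ g ∈ L', σ g = σ₁ g := fun g hg =>
              (Function.update_of_ne (fun hgf : g = f => hf (hgf ▸ hg)) _ σ).symm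
            have hw1 : Walk src tgt σ₁ (ohead src tgt σ f) L' b := walk_congr src tgt hag h2
            obtain ⟨ρ, hρ⟩ := ih σ₁ (ohead src tgt σ f) L' hw1 (by
              simp only [List.length_cons] at hn; omega)
            refine ⟨ρ, fun w => ?_⟩
            have h3 := outdeg_update src tgt σ f w
            have h4 := hρ w
            rw [← hσ₁] at h3
            have e1 : (if otail src tgt σ f = w then 1 else 0) = (if w = a then 1 else 0) := by
              rw [h1]; exact if_congr eq_comm rfl rfl
            have e2 : (if ohead src tgt σ f = w then 1 else 0)
                = (if w = ohead src tgt σ f then 1 else 0) := if_congr eq_comm rfl rfl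
            omega


theorem reach_of_surplus (σ τ : E → Bool) (a b : V)
    (ha : outdeg src tgt τ a < outdeg src tgt σ a)
    (hoff : ∀ w, w ≠ a → w ≠ b → outdeg src tgt σ w = outdeg src tgt τ w) :
    dirReach src tgt σ a b := by
  classical
  by_contra hb
  set R : V → Prop := dirReach src tgt σ a with hR
  set S : Finset V := univ.image (otail src tgt σ) ∪ univ.image (otail src tgt τ) with hS
  set RS : Finset V := S.filter R with hRS
  have hclose : ∀ f : E, R (otail src tgt σ f) → R (ohead src tgt σ f) :=
    fun f hf => Relation.ReflTransGen.tail hf ⟨f, rfl, rfl⟩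
  have key1 : ∀ ρ : E → Bool, (∀ f : E, otail src tgt ρ f ∈ S) →
      (univ.filter fun f => R (otail src tgt ρ f)).card = ∑ x ∈ RS, outdeg src tgt ρ x := by
    intro ρ hρS
    rw [Finset.card_eq_sum_card_fiberwise (f := fun f => otail src tgt ρ f) (t := RS)
      (fun f hf => by
        rw [hRS, Finset.mem_coe, mem_filter]
        exact ⟨hρS f, (mem_filter.mp (Finset.mem_coe.mp hf)).2⟩)]
    refine Finset.sum_congr rfl fun x hx => ?_
    congr 1
    rw [filter_filter]
    refine filter_congr fun f _ => ?_
    constructor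
    · exact fun h => h.2
    · exact fun h => ⟨h ▸ (mem_filter.mp hx).2, h⟩
  have hsub : (univ.filter fun f => R (otail src tgt σ f))
      ⊆ (univ.filter fun f => R (otail src tgt τ f)) := by
    intro f hf
    rw [mem_filter] at hf ⊢
    refine ⟨mem_univ f, ?_⟩
    have hor : otail src tgt τ f = otail src tgt σ f ∨ otail src tgt τ f = ohead src tgt σ f := by
      unfold otail ohead
      cases σ f <;> cases τ f <;> simp
    rcases hor with h | h
    · rw [h]; exact hf.2
    · rw [h]; exact hclose f hf.2
  have hSσ : ∀ f : E, otail src tgt σ f ∈ S := fun f =>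
    mem_union_left _ (mem_image_of_mem _ (mem_univ f))
  have hSτ : ∀ f : E, otail src tgt τ f ∈ S := fun f =>
    mem_union_right _ (mem_image_of_mem _ (mem_univ f))
  have hle : ∑ x ∈ RS, outdeg src tgt σ x ≤ ∑ x ∈ RS, outdeg src tgt τ x := by
    rw [← key1 σ hSσ, ← key1 τ hSτ]
    exact card_le_card hsub
  have haRS : a ∈ RS := by
    rw [hRS, mem_filter]
    constructor
    · have hpos : 0 < outdeg src tgt σ a := lt_of_le_of_lt (Nat.zero_le _) ha
      rw [outdeg, card_pos] at hpos
      obtain ⟨f, hf⟩ := hpos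
      rw [mem_filter] at hf
      exact hf.2 ▸ hSσ f
    · exact Relation.ReflTransGen.refl
  have hlt : ∑ x ∈ RS, outdeg src tgt τ x < ∑ x ∈ RS, outdeg src tgt σ x := by
    refine Finset.sum_lt_sum (fun x hx => ?_) ⟨a, haRS, ha⟩
    rcases eq_or_ne x a with rfl | hxa
    · exact ha.le
    · have hxb : x ≠ b := fun h => hb (h ▸ (mem_filter.mp hx).2)
      exact (hoff x hxa hxb).ge
  omega


end WalkPart

variable [Fintype E] [DecidableEq E] [DecidableEq V]
lemma card_filter_univ_split' (f : E) (P : E → Prop) [DecidablePred P] :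
    (univ.filter P).card = ((univ.erase f).filter P).card + if P f then 1 else 0 := by
  conv_lhs => rw [← insert_erase (mem_univ f)]
  rw [filter_insert]
  split_ifs with h
  · rw [card_insert_of_notMem (by simp)]
  · rw [Nat.add_zero]

lemma card_filter_subtype (e : E) (P : E → Prop) [DecidablePred P] :
    (univ.filter P).card
      = ((univ : Finset {f : E // f ≠ e}).filter fun f => P f.1).card
        + if P e then 1 else 0 := by
  rw [card_filter_univ_split' e P]
  congr 1
  rw [← Finset.filter_ne', filter_filter, ← Fintype.card_subtype, ← Fintype.card_subtype]
  exact Fintype.card_congr (Equiv.subtypeSubtypeEquivSubtypeInter _ _).symm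

lemma outdeg_restrict (src tgt : E → V) (e : E) (σ : E → Bool) :
    outdeg src tgt σ
      = addAt (otail src tgt σ e)
          (outdeg (fun f : {f : E // f ≠ e} => src f.1) (fun f => tgt f.1)
            (fun f => σ f.1)) := by
  funext w
  rw [addAt, outdeg, card_filter_subtype e]
  congr 1
  · exact if_congr eq_comm rfl rfl

def extOr (e : E) (σ' : {f : E // f ≠ e} → Bool) (b : Bool) : E → Bool :=
  fun f => if h : f = e then b else σ' ⟨f, h⟩

lemma extOr_restrict (e : E) (σ' : {f : E // f ≠ e} → Bool) (b : Bool) :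
    (fun f : {f : E // f ≠ e} => extOr e σ' b f.1) = σ' :=
  funext fun f => dif_neg f.2

lemma extOr_self (e : E) (σ' : {f : E // f ≠ e} → Bool) (b : Bool) :
    extOr e σ' b e = b := dif_pos rfl

lemma outdeg_contract (src tgt : E → V) (e : E) (hne : src e ≠ tgt e)
    (σ' : {f : E // f ≠ e} → Bool) :
    outdeg (V := {x : V // x ≠ tgt e})
      (fun f => if h : src f.1 = tgt e then ⟨src e, hne⟩ else ⟨src f.1, h⟩)
      (fun f => if h : tgt f.1 = tgt e then ⟨src e, hne⟩ else ⟨tgt f.1, h⟩) σ'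
    = fun x => if x.1 = src e
        then outdeg (fun f : {f : E // f ≠ e} => src f.1) (fun f => tgt f.1) σ' (src e)
             + outdeg (fun f : {f : E // f ≠ e} => src f.1) (fun f => tgt f.1) σ' (tgt e)
        else outdeg (fun f : {f : E // f ≠ e} => src f.1) (fun f => tgt f.1) σ' x.1 := by
  classical
  funext x
  set π : V → {x : V // x ≠ tgt e} := fun y => if h : y = tgt e then ⟨src e, hne⟩ else ⟨y, h⟩
    with hπ
  have hot : ∀ f : {f : E // f ≠ e},
      otail (fun f => if h : src f.1 = tgt e then ⟨src e, hne⟩ else ⟨src f.1, h⟩)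
        (fun f => if h : tgt f.1 = tgt e then ⟨src e, hne⟩ else ⟨tgt f.1, h⟩) σ' f
      = π (otail (fun f : {f : E // f ≠ e} => src f.1) (fun f => tgt f.1) σ' f) := by
    intro f
    rw [otail, otail, hπ]
    cases σ' f <;> simp
  have hiff : ∀ y : V, (π y = x) ↔
      (if x.1 = src e then (y = src e ∨ y = tgt e) else y = x.1) := by
    intro y
    rw [hπ]
    by_cases hy : y = tgt e
    · subst hy
      simp only [dif_pos rfl]
      rw [Subtype.ext_iff]
      by_cases hx : x.1 = src e
      · simp [hx, eq_comm]
      · simp only [if_neg hx]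
        constructor
        · intro h; exact absurd h.symm hx
        · intro h; exact absurd h.symm x.2
    · simp only [dif_neg hy]
      rw [Subtype.ext_iff]
      by_cases hx : x.1 = src e
      · simp only [if_pos hx, hx]
        constructor
        · intro h; exact Or.inl h
        · rintro (h | h)
          · exact h
          · exact absurd h hy
      · simp [hx]
  by_cases hx : x.1 = src e
  · rw [if_pos hx, outdeg]
    have : (univ.filter fun f : {f : E // f ≠ e} =>
        otail (fun f => if h : src f.1 = tgt e then ⟨src e, hne⟩ else ⟨src f.1, h⟩)
          (fun f => if h : tgt f.1 = tgt e then ⟨src e, hne⟩ else ⟨tgt f.1, h⟩) σ' f = x)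
        = (univ.filter fun f : {f : E // f ≠ e} =>
            otail (fun f : {f : E // f ≠ e} => src f.1) (fun f => tgt f.1) σ' f = src e)
          ∪ (univ.filter fun f : {f : E // f ≠ e} =>
            otail (fun f : {f : E // f ≠ e} => src f.1) (fun f => tgt f.1) σ' f = tgt e) := by
      rw [← filter_or]
      refine filter_congr fun f _ => ?_
      rw [hot f, hiff, if_pos hx]
    rw [this, card_union_of_disjoint, outdeg, outdeg]
    rw [Finset.disjoint_left]
    intro f hf1 hf2
    rw [mem_filter] at hf1 hf2
    exact hne (hf1.2 ▸ hf2.2)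
  · rw [if_neg hx, outdeg, outdeg]
    refine congrArg _ (filter_congr fun f _ => ?_)
    rw [hot f, hiff, if_neg hx]


/-- the contraction pushforward -/
def pushC {α : Type*} [DecidableEq α] (u v : α) (d : α → ℕ) : {x : α // x ≠ v} → ℕ :=
  fun x => if x.1 = u then d u + d v else d x.1

theorem count_abstract {α : Type*} [DecidableEq α] (u v : α) (huv : u ≠ v)
    (S : Set (α → ℕ)) (hfin : S.Finite)
    (hint : ∀ d₁ ∈ S, ∀ d₂ ∈ S, (∀ w, w ≠ u → w ≠ v → d₁ w = d₂ w) →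
      d₁ u + d₁ v = d₂ u + d₂ v → d₁ u < d₂ u → addAt v d₂ ∈ addAt u '' S) :
    ((addAt u '' S) ∪ (addAt v '' S)).ncard = S.ncard + (pushC u v '' S).ncard := by
  classical
  set B : Set (α → ℕ) := {d ∈ S | addAt v d ∉ addAt u '' S} with hB
  have hBS : B ⊆ S := fun d hd => hd.1
  -- C \ A = addAt v '' B
  have hdiff : (addAt v '' S) \ (addAt u '' S) = addAt v '' B := by
    ext c
    constructor
    · rintro ⟨⟨d, hd, rfl⟩, hc⟩
      exact ⟨d, ⟨hd, hc⟩, rfl⟩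
    · rintro ⟨d, ⟨hd, hd2⟩, rfl⟩
      exact ⟨⟨d, hd, rfl⟩, hd2⟩
  -- pushC facts
  have hpush_eq : ∀ d₁ d₂ : α → ℕ, pushC u v d₁ = pushC u v d₂ ↔
      ((∀ w, w ≠ u → w ≠ v → d₁ w = d₂ w) ∧ d₁ u + d₁ v = d₂ u + d₂ v) := by
    intro d₁ d₂
    constructor
    · intro h
      constructor
      · intro w hwu hwv
        have := congrFun h ⟨w, hwv⟩
        simpa [pushC, hwu] using this
      · have := congrFun h ⟨u, huv⟩
        simpa [pushC] using this
    · intro ⟨h1, h2⟩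
      funext x
      rw [pushC, pushC]
      by_cases hx : x.1 = u
      · rw [if_pos hx, if_pos hx, h2]
      · rw [if_neg hx, if_neg hx, h1 x.1 hx x.2]
  -- surjectivity of pushC from B
  have hsurj : pushC u v '' B = pushC u v '' S := by
    refine Set.Subset.antisymm (Set.image_mono hBS) ?_
    rintro c ⟨d, hd, rfl⟩
    -- strong induction on d u
    have claim : ∀ n : ℕ, ∀ d : α → ℕ, d ∈ S → d u = n → pushC u v d ∈ pushC u v '' B := by
      intro n
      induction n using Nat.strong_induction_on with
      | _ n ih =>
        intro d hd hdu
        by_cases hdB : addAt v d ∈ addAt u '' S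
        · obtain ⟨d'', hd''S, hEq⟩ := hdB
          have hu : d'' u + 1 = d u := by
            have := congrFun hEq u
            simp [addAt, huv] at this
            omega
          have hv : d'' v = d v + 1 := by
            have := congrFun hEq v
            simp [addAt, Ne.symm huv] at this
            omega
          have hoffw : ∀ w, w ≠ u → w ≠ v → d'' w = d w := by
            intro w hwu hwv
            have := congrFun hEq w
            simp only [addAt, if_neg hwu, if_neg hwv] at this
            omega
          have hpp : pushC u v d'' = pushC u v d := by
            rw [hpush_eq]
            exact ⟨hoffw, by omega⟩
          rw [← hpp]
          exact ih (d'' u) (by omega) d'' hd''S rfl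
        · exact ⟨d, ⟨hd, hdB⟩, rfl⟩
    exact claim (d u) d hd rfl
  -- injectivity of pushC on B
  have hinj : Set.InjOn (pushC u v) B := by
    intro d₁ h₁ d₂ h₂ hp
    obtain ⟨hoffw, hsum⟩ := (hpush_eq d₁ d₂).mp hp
    have huu : d₁ u = d₂ u := by
      by_contra hne
      rcases Nat.lt_or_ge (d₁ u) (d₂ u) with hlt | hge
      · exact h₂.2 (hint d₁ h₁.1 d₂ h₂.1 hoffw hsum hlt)
      · have hlt : d₂ u < d₁ u := by omega
        exact h₁.2 (hint d₂ h₂.1 d₁ h₁.1 (fun w h1 h2 => (hoffw w h1 h2).symm) (by omega) hlt)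
    funext w
    by_cases hwu : w = u
    · rw [hwu]; exact huu
    · by_cases hwv : w = v
      · rw [hwv]; omega
      · exact hoffw w hwu hwv
  -- cardinal bookkeeping
  have hfinA : (addAt u '' S).Finite := hfin.image _
  have hfinC : (addAt v '' S).Finite := hfin.image _
  have hsplit : (addAt u '' S) ∪ (addAt v '' S)
      = (addAt u '' S) ∪ ((addAt v '' S) \ (addAt u '' S)) := by
    rw [Set.union_diff_self]
  rw [hsplit, Set.ncard_union_eq Set.disjoint_sdiff_right hfinA hfinC.diff, hdiff,
    Set.ncard_image_of_injective S (addAt_injective u),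
    Set.ncard_image_of_injective B (addAt_injective v),
    ← hsurj, Set.ncard_image_of_injOn hinj]


end Orient
end OrientAux

/-- If `e` is not a loop, the number of distinct outdegree vectors of
orientations of `G` equals that of `G - e` plus that of `G / e`. -/
theorem stmt_16 [Fintype E] [DecidableEq V] [DecidableEq E]
    (src tgt : E → V) (e : E) (hne : src e ≠ tgt e) :
    Nat.card (Set.range fun σ : E → Bool => outdeg src tgt σ) =
      Nat.card (Set.range fun σ : {f : E // f ≠ e} → Bool =>
        outdeg (fun f => src f.1) (fun f => tgt f.1) σ) +
      Nat.card (Set.range fun σ : {f : E // f ≠ e} → Bool =>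
        outdeg (V := {x : V // x ≠ tgt e})
          (fun f => if h : src f.1 = tgt e then ⟨src e, hne⟩ else ⟨src f.1, h⟩)
          (fun f => if h : tgt f.1 = tgt e then ⟨src e, hne⟩ else ⟨tgt f.1, h⟩) σ) := by
  classical
  have hD' : ∀ σ : E → Bool,
      (outdeg (fun f : {f : E // f ≠ e} => src f.1) (fun f => tgt f.1) (fun f => σ f.1))
        = (fun σ' : {f : E // f ≠ e} → Bool =>
            outdeg (fun f => src f.1) (fun f => tgt f.1) σ') (fun f => σ f.1) := fun _ => rfl
  set D' : ({f : E // f ≠ e} → Bool) → (V → ℕ) :=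
    fun σ' => outdeg (fun f => src f.1) (fun f => tgt f.1) σ' with hD'def
  have hrange : (Set.range fun σ : E → Bool => outdeg src tgt σ)
      = (Orient.addAt (src e) '' Set.range D') ∪ (Orient.addAt (tgt e) '' Set.range D') := by
    ext d
    simp only [Set.mem_union, Set.mem_image, Set.mem_range]
    constructor
    · rintro ⟨σ, rfl⟩
      rcases hσe : σ e with _ | _
      · left
        refine ⟨D' (fun f => σ f.1), ⟨_, rfl⟩, ?_⟩
        rw [Orient.outdeg_restrict src tgt e σ]
        have : otail src tgt σ e = src e := by rw [otail, hσe]; rfl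
        rw [this]
      · right
        refine ⟨D' (fun f => σ f.1), ⟨_, rfl⟩, ?_⟩
        rw [Orient.outdeg_restrict src tgt e σ]
        have : otail src tgt σ e = tgt e := by rw [otail, hσe]; rfl
        rw [this]
    · rintro (⟨d', ⟨σ', rfl⟩, rfl⟩ | ⟨d', ⟨σ', rfl⟩, rfl⟩)
      · refine ⟨Orient.extOr e σ' false, ?_⟩
        rw [Orient.outdeg_restrict src tgt e, Orient.extOr_restrict]
        have : otail src tgt (Orient.extOr e σ' false) e = src e := by
          rw [otail, Orient.extOr_self]; rfl
        rw [this]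
      · refine ⟨Orient.extOr e σ' true, ?_⟩
        rw [Orient.outdeg_restrict src tgt e, Orient.extOr_restrict]
        have : otail src tgt (Orient.extOr e σ' true) e = tgt e := by
          rw [otail, Orient.extOr_self]; rfl
        rw [this]
  have hrange2 : (Set.range fun σ : {f : E // f ≠ e} → Bool =>
        outdeg (V := {x : V // x ≠ tgt e})
          (fun f => if h : src f.1 = tgt e then ⟨src e, hne⟩ else ⟨src f.1, h⟩)
          (fun f => if h : tgt f.1 = tgt e then ⟨src e, hne⟩ else ⟨tgt f.1, h⟩) σ)
      = Orient.pushC (src e) (tgt e) '' Set.range D' := by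
    have h1 : (fun σ : {f : E // f ≠ e} → Bool =>
        outdeg (V := {x : V // x ≠ tgt e})
          (fun f => if h : src f.1 = tgt e then ⟨src e, hne⟩ else ⟨src f.1, h⟩)
          (fun f => if h : tgt f.1 = tgt e then ⟨src e, hne⟩ else ⟨tgt f.1, h⟩) σ)
        = (Orient.pushC (src e) (tgt e)) ∘ D' := by
      funext σ
      rw [Function.comp_apply, Orient.outdeg_contract src tgt e hne σ]
      rfl
    rw [h1, Set.range_comp]
  have hint : ∀ d₁ ∈ Set.range D', ∀ d₂ ∈ Set.range D',
      (∀ w, w ≠ src e → w ≠ tgt e → d₁ w = d₂ w) →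
      d₁ (src e) + d₁ (tgt e) = d₂ (src e) + d₂ (tgt e) →
      d₁ (src e) < d₂ (src e) →
      Orient.addAt (tgt e) d₂ ∈ Orient.addAt (src e) '' Set.range D' := by
    rintro _ ⟨τ, rfl⟩ _ ⟨σ, rfl⟩ hoffw hsum hlt
    have hreach := Orient.reach_of_surplus (fun f : {f : E // f ≠ e} => src f.1)
      (fun f => tgt f.1) σ τ (src e) (tgt e) hlt
      (fun w hwu hwv => (hoffw w hwu hwv).symm)
    obtain ⟨L, hL⟩ := Orient.dirReach_walk _ _ hreach
    obtain ⟨ρ, hρ⟩ := Orient.reverse_walk _ _ σ (src e) (tgt e) L hL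
    refine ⟨D' ρ, ⟨ρ, rfl⟩, ?_⟩
    funext w
    simp only [Orient.addAt, hD'def]
    exact hρ w
  rw [Nat.card_coe_set_eq, Nat.card_coe_set_eq, Nat.card_coe_set_eq,
    hrange, hrange2,
    Orient.count_abstract (src e) (tgt e) hne (Set.range D') (Set.finite_range D') hint]
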